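/- Suppose the factor graph admits a valid solution x*, the priors satisfy the sufficient initialization for x*, and for some n ≥ 0 the variable-to-factor messages satisfy m^{(n)}_{v→J}(x*_v) > m^{(n)}_{v→J}(1 − x*_v) for every v ∈ V and every J ∈ 𝒥_v. Then the variable-to-factor messages at the next iteration satisfy m^{(n+1)}_{v→J}(x*_v) > m^{(n+1)}_{v→J}(1 − x*_v) for every v ∈ V and every J ∈ 𝒥_v. -/

import Mathlib

open Finset

/-- A factor graph: finite variable index set `V`, finite factor index set `𝒥`,
a nonempty neighborhood `nbhd J ⊆ V` for each factor `J`, every variable belonging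
to at least one factor, and a `{0,1}`-valued factor function `g J` on `{0,1}^{V_J}`. -/
structure FactorGraph (V 𝒥 : Type) [Fintype V] [DecidableEq V] [Fintype 𝒥] [DecidableEq 𝒥] where
  nbhd : 𝒥 → Finset V
  nbhd_nonempty : ∀ J : 𝒥, (nbhd J).Nonempty
  facs_nonempty : ∀ v : V, ∃ J : 𝒥, v ∈ nbhd J
  g : (J : 𝒥) → ({y // y ∈ nbhd J} → Bool) → Bool

variable {V 𝒥 : Type} [Fintype V] [DecidableEq V] [Fintype 𝒥] [DecidableEq 𝒥]

/-- `𝒥_v`: the set of factors adjacent to variable `v`. -/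
def FactorGraph.Jset (FG : FactorGraph V 𝒥) (v : V) : Finset 𝒥 :=
  univ.filter fun J => v ∈ FG.nbhd J

/-- Restriction of a global assignment to the neighborhood of factor `J`. -/
def FactorGraph.restrict (FG : FactorGraph V 𝒥) (x : V → Bool) (J : 𝒥) :
    {y // y ∈ FG.nbhd J} → Bool :=
  fun y => x y.1

/-- `x` is a valid solution if every factor evaluates to `1` on it. -/
def FactorGraph.ValidSolution (FG : FactorGraph V 𝒥) (x : V → Bool) : Prop :=
  ∀ J : 𝒥, FG.g J (FG.restrict x J) = true

/-- `κ_v = max_{J ∈ 𝒥_v} |{z ∈ {0,1}^{V_J} : g_J(z) = 1}|`. -/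
def FactorGraph.kappa (FG : FactorGraph V 𝒥) (v : V) : ℕ :=
  (FG.Jset v).sup fun J =>
    ((univ : Finset ({y // y ∈ FG.nbhd J} → Bool)).filter fun z => FG.g J z = true).card

/-- `ε_v = 1 / (1 + κ_v ^ |𝒥_v|)`. -/
noncomputable def FactorGraph.eps (FG : FactorGraph V 𝒥) (v : V) : ℝ :=
  1 / (1 + (FG.kappa v : ℝ) ^ (FG.Jset v).card)

/-- Priors: `P_v(0) = q_v`, `P_v(1) = 1 - q_v`. -/
def prior (q : V → ℝ) (v : V) (x : Bool) : ℝ :=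
  if x then 1 - q v else q v

/-- A run of loopy belief propagation on the factor graph `FG` with priors `q`:
messages `mVF` (variable-to-factor) and `mFV` (factor-to-variable) in `[0,1]`,
positive normalization constants, initialization by the priors, the sum-product
update rules, and per-message normalization. -/
structure BPRun (FG : FactorGraph V 𝒥) (q : V → ℝ) where
  q_mem : ∀ v : V, q v ∈ Set.Icc (0 : ℝ) 1
  mVF : ℕ → V → 𝒥 → Bool → ℝ
  mFV : ℕ → 𝒥 → V → Bool → ℝ
  CFV : ℕ → 𝒥 → V → ℝ
  CVF : ℕ → V → 𝒥 → ℝ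
  CFV_pos : ∀ n J v, v ∈ FG.nbhd J → 0 < CFV n J v
  CVF_pos : ∀ n v J, v ∈ FG.nbhd J → 0 < CVF n v J
  mVF_mem : ∀ n v J x, v ∈ FG.nbhd J → mVF n v J x ∈ Set.Icc (0 : ℝ) 1
  mFV_mem : ∀ n J v x, v ∈ FG.nbhd J → mFV n J v x ∈ Set.Icc (0 : ℝ) 1
  mVF_init : ∀ v J, v ∈ FG.nbhd J →
    mVF 0 v J false = q v ∧ mVF 0 v J true = 1 - q v
  mFV_eq : ∀ n : ℕ, ∀ J v, ∀ hv : v ∈ FG.nbhd J, ∀ x : Bool,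
    mFV (n + 1) J v x = CFV (n + 1) J v *
      ∑ z : {y // y ∈ FG.nbhd J} → Bool,
        (if z ⟨v, hv⟩ = x ∧ FG.g J z = true then
          ∏ y ∈ ((FG.nbhd J).erase v).attach,
            mVF n y.1 J (z ⟨y.1, Finset.mem_of_mem_erase y.2⟩)
        else 0)
  mVF_eq : ∀ n : ℕ, ∀ v J, v ∈ FG.nbhd J → ∀ x : Bool,
    mVF (n + 1) v J x = CVF (n + 1) v J * prior q v x *
      ∏ I ∈ (FG.Jset v).erase J, mFV (n + 1) I v x
  mVF_norm : ∀ n v J, v ∈ FG.nbhd J → mVF n v J false + mVF n v J true = 1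
  mFV_norm : ∀ n J v, v ∈ FG.nbhd J →
    mFV (n + 1) J v false + mFV (n + 1) J v true = 1

/-- Marginals: `r^{(n)}_v(x) = P_v(x) · ∏_{J ∈ 𝒥_v} m^{(n)}_{J→v}(x)`. -/
noncomputable def marginal (FG : FactorGraph V 𝒥) {q : V → ℝ} (R : BPRun FG q)
    (n : ℕ) (v : V) (x : Bool) : ℝ :=
  prior q v x * ∏ J ∈ FG.Jset v, R.mFV n J v x

/-- The priors satisfy the sufficient initialization for `x`:
`q_v > 1 - ε_v` if `x_v = 0` and `q_v < ε_v` if `x_v = 1`. -/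
def SuffInit (FG : FactorGraph V 𝒥) (q : V → ℝ) (x : V → Bool) : Prop :=
  ∀ v : V, (x v = false → 1 - FG.eps v < q v) ∧ (x v = true → q v < FG.eps v)

/-- **Induction step for variable-to-factor messages**: if `x*` is a valid
solution, the priors satisfy the sufficient initialization for `x*`, and at some
iteration `n` the variable-to-factor messages satisfy
`m^{(n)}_{v→J}(x*_v) > m^{(n)}_{v→J}(1 - x*_v)` for every `v ∈ V` and `J ∈ 𝒥_v`,
then the same strict inequality holds at iteration `n + 1`. -/
theorem bp_message_induction_step
    {V 𝒥 : Type} [Fintype V] [DecidableEq V] [Fintype 𝒥] [DecidableEq 𝒥]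
    (FG : FactorGraph V 𝒥) (q : V → ℝ) (R : BPRun FG q)
    (xstar : V → Bool) (hvalid : FG.ValidSolution xstar)
    (hinit : SuffInit FG q xstar) (n : ℕ)
    (hmsg : ∀ v : V, ∀ J : 𝒥, v ∈ FG.nbhd J →
      R.mVF n v J (xstar v) > R.mVF n v J (!xstar v)) :
    ∀ v : V, ∀ J : 𝒥, v ∈ FG.nbhd J →
      R.mVF (n + 1) v J (xstar v) > R.mVF (n + 1) v J (!xstar v) := by
  intro v J hv
  have hJmem : J ∈ FG.Jset v := by simp [FactorGraph.Jset, hv]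
  set κ : ℝ := (FG.kappa v : ℝ) with hκdef
  set d : ℕ := (FG.Jset v).card with hddef
  set e : ℕ := ((FG.Jset v).erase J).card with hedef
  have hed : e + 1 = d := Finset.card_erase_add_one hJmem
  have hκ1 : (1 : ℝ) ≤ κ := by
    have hcard : 1 ≤ ((univ : Finset ({y // y ∈ FG.nbhd J} → Bool)).filter
        fun z => FG.g J z = true).card := by
      refine Finset.card_pos.mpr ⟨FG.restrict xstar J, ?_⟩
      simp [hvalid J]
    have hle : ((univ : Finset ({y // y ∈ FG.nbhd J} → Bool)).filter
        fun z => FG.g J z = true).card ≤ FG.kappa v :=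
      Finset.le_sup (f := fun J : 𝒥 => ((univ : Finset ({y // y ∈ FG.nbhd J} → Bool)).filter
        fun z => FG.g J z = true).card) hJmem
    have h1 : 1 ≤ FG.kappa v := le_trans hcard hle
    rw [hκdef]
    exact_mod_cast h1
  have hκ0 : (0 : ℝ) ≤ κ := le_trans zero_le_one hκ1
  -- Key bound for every factor adjacent to v
  have key : ∀ I ∈ FG.Jset v, 0 < R.mFV (n+1) I v (xstar v) ∧
      R.mFV (n+1) I v (!xstar v) ≤ κ * R.mFV (n+1) I v (xstar v) := by
    intro I hI
    have hvI : v ∈ FG.nbhd I := by simpa [FactorGraph.Jset] using hI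
    have hmax : ∀ (y : V), y ∈ FG.nbhd I → ∀ c : Bool,
        R.mVF n y I c ≤ R.mVF n y I (xstar y) := by
      intro y hy c
      have hcases : c = xstar y ∨ c = !xstar y := by
        cases c <;> cases hxy : xstar y <;> simp [hxy]
      rcases hcases with h | h
      · rw [h]
      · rw [h]; exact le_of_lt (hmsg y I hy)
    have hpos : ∀ (y : V), y ∈ FG.nbhd I → 0 < R.mVF n y I (xstar y) := by
      intro y hy
      exact lt_of_le_of_lt (R.mVF_mem n y I (!xstar y) hy).1 (hmsg y I hy)
    set t : ℝ := ∏ y ∈ ((FG.nbhd I).erase v).attach,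
        R.mVF n y.1 I (xstar y.1) with htdef
    have ht0 : 0 < t := by
      refine Finset.prod_pos ?_
      intro y _
      exact hpos y.1 (Finset.mem_of_mem_erase y.2)
    have hterm_nonneg : ∀ (x : Bool) (z : {y // y ∈ FG.nbhd I} → Bool),
        (0:ℝ) ≤ (if z ⟨v, hvI⟩ = x ∧ FG.g I z = true then
          ∏ y ∈ ((FG.nbhd I).erase v).attach,
            R.mVF n y.1 I (z ⟨y.1, Finset.mem_of_mem_erase y.2⟩) else 0) := by
      intro x z
      split_ifs with h
      · exact Finset.prod_nonneg fun y _ =>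
          (R.mVF_mem n y.1 I _ (Finset.mem_of_mem_erase y.2)).1
      · exact le_refl 0
    -- lower bound for the "correct" sum
    have hSb : t ≤ ∑ z : {y // y ∈ FG.nbhd I} → Bool,
        (if z ⟨v, hvI⟩ = xstar v ∧ FG.g I z = true then
          ∏ y ∈ ((FG.nbhd I).erase v).attach,
            R.mVF n y.1 I (z ⟨y.1, Finset.mem_of_mem_erase y.2⟩) else 0) := by
      have hmem : FG.restrict xstar I ∈
          (univ : Finset ({y // y ∈ FG.nbhd I} → Bool)) := Finset.mem_univ _
      have := Finset.single_le_sum (f := fun z : {y // y ∈ FG.nbhd I} → Bool =>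
        (if z ⟨v, hvI⟩ = xstar v ∧ FG.g I z = true then
          ∏ y ∈ ((FG.nbhd I).erase v).attach,
            R.mVF n y.1 I (z ⟨y.1, Finset.mem_of_mem_erase y.2⟩) else 0))
        (fun z _ => hterm_nonneg (xstar v) z) hmem
      have heq : (if (FG.restrict xstar I) ⟨v, hvI⟩ = xstar v ∧
          FG.g I (FG.restrict xstar I) = true then
          ∏ y ∈ ((FG.nbhd I).erase v).attach,
            R.mVF n y.1 I ((FG.restrict xstar I) ⟨y.1, Finset.mem_of_mem_erase y.2⟩)
          else 0) = t := by
        rw [if_pos ⟨rfl, hvalid I⟩, htdef]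
        rfl
      simp only [heq] at this
      exact this
    -- upper bound for the "wrong" sum
    have hSnb : (∑ z : {y // y ∈ FG.nbhd I} → Bool,
        (if z ⟨v, hvI⟩ = !xstar v ∧ FG.g I z = true then
          ∏ y ∈ ((FG.nbhd I).erase v).attach,
            R.mVF n y.1 I (z ⟨y.1, Finset.mem_of_mem_erase y.2⟩) else 0)) ≤ κ * t := by
      have step1 : (∑ z : {y // y ∈ FG.nbhd I} → Bool,
          (if z ⟨v, hvI⟩ = !xstar v ∧ FG.g I z = true then
            ∏ y ∈ ((FG.nbhd I).erase v).attach,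
              R.mVF n y.1 I (z ⟨y.1, Finset.mem_of_mem_erase y.2⟩) else 0)) ≤
          ∑ z : {y // y ∈ FG.nbhd I} → Bool,
            (if FG.g I z = true then t else 0) := by
        refine Finset.sum_le_sum ?_
        intro z _
        split_ifs with h1 h2
        · refine Finset.prod_le_prod ?_ ?_
          · intro y _
            exact (R.mVF_mem n y.1 I _ (Finset.mem_of_mem_erase y.2)).1
          · intro y _
            exact hmax y.1 (Finset.mem_of_mem_erase y.2) _
        · exact absurd h1.2 h2
        · exact le_of_lt ht0
        · exact le_refl 0
      have step2 : (∑ z : {y // y ∈ FG.nbhd I} → Bool,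
          (if FG.g I z = true then t else 0)) =
          (((univ : Finset ({y // y ∈ FG.nbhd I} → Bool)).filter
            fun z => FG.g I z = true).card : ℝ) * t := by
        rw [← Finset.sum_filter, Finset.sum_const, nsmul_eq_mul]
      have step3 : (((univ : Finset ({y // y ∈ FG.nbhd I} → Bool)).filter
            fun z => FG.g I z = true).card : ℝ) * t ≤ κ * t := by
        refine mul_le_mul_of_nonneg_right ?_ (le_of_lt ht0)
        have : ((univ : Finset ({y // y ∈ FG.nbhd I} → Bool)).filter
            fun z => FG.g I z = true).card ≤ FG.kappa v :=
          Finset.le_sup (f := fun J : 𝒥 => ((univ : Finset ({y // y ∈ FG.nbhd J} → Bool)).filter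
            fun z => FG.g J z = true).card) hI
        rw [hκdef]
        exact_mod_cast this
      calc _ ≤ _ := step1
        _ = _ := step2
        _ ≤ _ := step3
    have hC : 0 < R.CFV (n+1) I v := R.CFV_pos (n+1) I v hvI
    have hFb := R.mFV_eq n I v hvI (xstar v)
    have hFnb := R.mFV_eq n I v hvI (!xstar v)
    constructor
    · rw [hFb]
      exact mul_pos hC (lt_of_lt_of_le ht0 hSb)
    · rw [hFb, hFnb]
      calc R.CFV (n+1) I v * _ ≤ R.CFV (n+1) I v * (κ * t) :=
            mul_le_mul_of_nonneg_left hSnb (le_of_lt hC)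
        _ ≤ R.CFV (n+1) I v * (κ * _) := by
            refine mul_le_mul_of_nonneg_left ?_ (le_of_lt hC)
            exact mul_le_mul_of_nonneg_left hSb hκ0
        _ = κ * (R.CFV (n+1) I v * _) := by ring
  -- products of factor-to-variable messages
  set Ps : ℝ := ∏ I ∈ (FG.Jset v).erase J, R.mFV (n+1) I v (xstar v) with hPs
  set Pn : ℝ := ∏ I ∈ (FG.Jset v).erase J, R.mFV (n+1) I v (!xstar v) with hPn
  have hPspos : 0 < Ps := by
    refine Finset.prod_pos ?_
    intro I hI
    exact (key I (Finset.mem_of_mem_erase hI)).1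
  have hPnle : Pn ≤ κ ^ e * Ps := by
    have h1 : Pn ≤ ∏ I ∈ (FG.Jset v).erase J, (κ * R.mFV (n+1) I v (xstar v)) := by
      refine Finset.prod_le_prod ?_ ?_
      · intro I hI
        have hI' := Finset.mem_of_mem_erase hI
        have hvI : v ∈ FG.nbhd I := by simpa [FactorGraph.Jset] using hI'
        exact (R.mFV_mem (n+1) I v (!xstar v) hvI).1
      · intro I hI
        exact (key I (Finset.mem_of_mem_erase hI)).2
    have h2 : ∏ I ∈ (FG.Jset v).erase J, (κ * R.mFV (n+1) I v (xstar v)) =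
        κ ^ e * Ps := by
      rw [Finset.prod_mul_distrib, Finset.prod_const, hedef]
    rw [h2] at h1
    exact h1
  have hPnnn : 0 ≤ Pn := by
    refine Finset.prod_nonneg ?_
    intro I hI
    have hvI : v ∈ FG.nbhd I := by
      simpa [FactorGraph.Jset] using Finset.mem_of_mem_erase hI
    exact (R.mFV_mem (n+1) I v (!xstar v) hvI).1
  -- prior bounds
  have hA1 : (1:ℝ) ≤ κ ^ d := by
    calc (1:ℝ) = 1 ^ d := (one_pow d).symm
      _ ≤ κ ^ d := pow_le_pow_left₀ zero_le_one hκ1 d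
  have hAd : (0:ℝ) < 1 + κ ^ d := by linarith
  have hεdef : FG.eps v = 1 / (1 + κ ^ d) := rfl
  have hεpos : 0 < FG.eps v := by rw [hεdef]; positivity
  have hprior_lt : prior q v (!xstar v) < FG.eps v ∧
      1 - FG.eps v < prior q v (xstar v) := by
    rcases hinit v with ⟨h0, h1⟩
    cases hx : xstar v
    · have hq := h0 hx
      constructor
      · have : 1 - q v < FG.eps v := by linarith
        simpa [prior] using this
      · simpa [prior] using hq
    · have hq := h1 hx
      constructor
      · simpa [prior] using hq
      · have : 1 - FG.eps v < 1 - q v := by linarith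
        simpa [prior] using this
  have hprior_nn : 0 ≤ prior q v (!xstar v) := by
    rcases R.q_mem v with ⟨hq0, hq1⟩
    cases xstar v <;> simp [prior] <;> linarith
  have hκe_pos : (0:ℝ) < κ ^ e := by positivity
  have hκed : κ ^ e ≤ κ ^ d := pow_le_pow_right₀ hκ1 (by omega)
  have hεκ : FG.eps v * κ ^ d = 1 - FG.eps v := by
    rw [hεdef]; field_simp; ring
  have hkey2 : prior q v (!xstar v) * κ ^ e < prior q v (xstar v) := by
    have h1 : prior q v (!xstar v) * κ ^ e < FG.eps v * κ ^ e :=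
      mul_lt_mul_of_pos_right hprior_lt.1 hκe_pos
    have h2 : FG.eps v * κ ^ e ≤ FG.eps v * κ ^ d :=
      mul_le_mul_of_nonneg_left hκed (le_of_lt hεpos)
    have h3 := hprior_lt.2
    rw [hεκ] at h2
    linarith
  -- assemble
  have hCVF : 0 < R.CVF (n+1) v J := R.CVF_pos (n+1) v J hv
  rw [R.mVF_eq n v J hv (xstar v), R.mVF_eq n v J hv (!xstar v), ← hPs, ← hPn]
  have hchain : prior q v (!xstar v) * Pn < prior q v (xstar v) * Ps := by
    calc prior q v (!xstar v) * Pn ≤ prior q v (!xstar v) * (κ ^ e * Ps) :=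
          mul_le_mul_of_nonneg_left hPnle hprior_nn
      _ = (prior q v (!xstar v) * κ ^ e) * Ps := by ring
      _ < prior q v (xstar v) * Ps := mul_lt_mul_of_pos_right hkey2 hPspos
  calc R.CVF (n+1) v J * prior q v (!xstar v) * Pn
      = R.CVF (n+1) v J * (prior q v (!xstar v) * Pn) := by ring
    _ < R.CVF (n+1) v J * (prior q v (xstar v) * Ps) :=
        mul_lt_mul_of_pos_left hchain hCVF
    _ = R.CVF (n+1) v J * prior q v (xstar v) * Ps := by ring
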